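/- Let c₁ < c₂ be real numbers, let g be a real polynomial that is not identically zero, let k < p be natural numbers, let α : ℕ → ℝ satisfy α_{k+1} ≠ 0, and let f(ξ) = Σ_{m=k+1}^{p} α_m ξ^m. Then, as δ → 0⁺, the squared H¹ seminorm of the tensor-product function φ(ξ₁,ξ₂) = g(ξ₁)f(ξ₂) on the rectangle [c₁,c₂] × [0,δ], namely ∫_{c₁}^{c₂}∫_0^δ [ (g′(ξ₁))²(f(ξ₂))² + (g(ξ₁))²(f′(ξ₂))² ] dξ₂ dξ₁, is Θ(δ^{2k+1}). -/

import Mathlib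

open Topology Asymptotics Polynomial

private lemma aux_deriv_sum (k p : ℕ) (α : ℕ → ℝ) (t : ℝ) :
    deriv (fun t : ℝ => ∑ m ∈ Finset.Icc (k + 1) p, α m * t ^ m) t
      = ∑ m ∈ Finset.Icc (k + 1) p, α m * (m * t ^ (m - 1)) :=
  by
    have h := (HasDerivAt.sum (u := Finset.Icc (k + 1) p)
      fun m _ => (hasDerivAt_pow m t).const_mul (α m))
    rw [Finset.sum_fn] at h
    exact h.deriv

set_option maxHeartbeats 1000000 in
theorem h1_seminorm_asymptotics_config_a (c₁ c₂ : ℝ) (hc : c₁ < c₂)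
    (g : Polynomial ℝ) (hg : g ≠ 0)
    (k p : ℕ) (hkp : k < p) (α : ℕ → ℝ) (hα : α (k + 1) ≠ 0) :
    (fun δ : ℝ => ∫ ξ₁ in c₁..c₂, ∫ ξ₂ in (0:ℝ)..δ,
        ((Polynomial.derivative g).eval ξ₁) ^ 2 *
          (∑ m ∈ Finset.Icc (k + 1) p, α m * ξ₂ ^ m) ^ 2 +
        (g.eval ξ₁) ^ 2 *
          (deriv (fun t : ℝ => ∑ m ∈ Finset.Icc (k + 1) p, α m * t ^ m) ξ₂) ^ 2)
      =Θ[𝓝[>] (0:ℝ)] (fun δ : ℝ => δ ^ (2 * k + 1)) := by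
  have hc' : c₁ ≤ c₂ := hc.le
  have hcf : Continuous fun t : ℝ => ∑ m ∈ Finset.Icc (k + 1) p, α m * t ^ m :=
    continuous_finset_sum _ fun m _ => continuous_const.mul (continuous_pow m)
  have hcv : Continuous fun t : ℝ => ∑ m ∈ Finset.Icc (k + 1) p, α m * ((m : ℝ) * t ^ (m - 1)) :=
    continuous_finset_sum _ fun m _ =>
      continuous_const.mul (continuous_const.mul (continuous_pow (m - 1)))
  set u : ℝ → ℝ := fun t => (∑ m ∈ Finset.Icc (k + 1) p, α m * t ^ m) ^ 2 with hu
  set w : ℝ → ℝ := fun t => (∑ m ∈ Finset.Icc (k + 1) p, α m * ((m : ℝ) * t ^ (m - 1))) ^ 2 with hw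
  have hcu : Continuous u := hcf.pow 2
  have hcw : Continuous w := hcv.pow 2
  set A : ℝ := ∫ ξ₁ in c₁..c₂, ((Polynomial.derivative g).eval ξ₁) ^ 2 with hA
  set B : ℝ := ∫ ξ₁ in c₁..c₂, (g.eval ξ₁) ^ 2 with hB
  set F : ℝ → ℝ := fun δ => ∫ t in (0:ℝ)..δ, u t with hF
  set G : ℝ → ℝ := fun δ => ∫ t in (0:ℝ)..δ, w t with hG
  -- reduce the double integral to A * F δ + B * G δ
  have key : ∀ δ : ℝ,
      (∫ ξ₁ in c₁..c₂, ∫ ξ₂ in (0:ℝ)..δ,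
        ((Polynomial.derivative g).eval ξ₁) ^ 2 *
          (∑ m ∈ Finset.Icc (k + 1) p, α m * ξ₂ ^ m) ^ 2 +
        (g.eval ξ₁) ^ 2 *
          (deriv (fun t : ℝ => ∑ m ∈ Finset.Icc (k + 1) p, α m * t ^ m) ξ₂) ^ 2)
      = A * F δ + B * G δ := by
    intro δ
    have h1 : ∀ ξ₁ : ℝ,
        (∫ ξ₂ in (0:ℝ)..δ,
          ((Polynomial.derivative g).eval ξ₁) ^ 2 *
            (∑ m ∈ Finset.Icc (k + 1) p, α m * ξ₂ ^ m) ^ 2 +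
          (g.eval ξ₁) ^ 2 *
            (deriv (fun t : ℝ => ∑ m ∈ Finset.Icc (k + 1) p, α m * t ^ m) ξ₂) ^ 2)
        = ((Polynomial.derivative g).eval ξ₁) ^ 2 * F δ + (g.eval ξ₁) ^ 2 * G δ := by
      intro ξ₁
      simp only [aux_deriv_sum]
      rw [intervalIntegral.integral_add ((show Continuous fun t => (Polynomial.derivative g).eval ξ₁ ^ 2 * u t from continuous_const.mul hcu).intervalIntegrable _ _)
          ((show Continuous fun t => g.eval ξ₁ ^ 2 * w t from continuous_const.mul hcw).intervalIntegrable _ _),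
        intervalIntegral.integral_const_mul, intervalIntegral.integral_const_mul]
    rw [intervalIntegral.integral_congr (fun ξ₁ _ => h1 ξ₁),
      intervalIntegral.integral_add
        ((show Continuous fun x => (Polynomial.derivative g).eval x ^ 2 * F δ from ((Polynomial.derivative g).continuous.pow 2).mul continuous_const).intervalIntegrable _ _)
        ((show Continuous fun x => g.eval x ^ 2 * G δ from (g.continuous.pow 2).mul continuous_const).intervalIntegrable _ _),
      intervalIntegral.integral_mul_const, intervalIntegral.integral_mul_const]
  have keyfun : (fun δ : ℝ => ∫ ξ₁ in c₁..c₂, ∫ ξ₂ in (0:ℝ)..δ,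
        ((Polynomial.derivative g).eval ξ₁) ^ 2 *
          (∑ m ∈ Finset.Icc (k + 1) p, α m * ξ₂ ^ m) ^ 2 +
        (g.eval ξ₁) ^ 2 *
          (deriv (fun t : ℝ => ∑ m ∈ Finset.Icc (k + 1) p, α m * t ^ m) ξ₂) ^ 2)
      = fun δ => A * F δ + B * G δ := funext key
  rw [keyfun]
  -- positivity of B
  have hBpos : 0 < B := by
    have hgi : IntervalIntegrable (fun x => (g.eval x) ^ 2) MeasureTheory.volume c₁ c₂ :=
      (g.continuous.pow 2).intervalIntegrable _ _
    rw [hB, intervalIntegral.integral_pos_iff_support_of_nonneg_ae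
      (Filter.Eventually.of_forall fun x => sq_nonneg _) hgi]
    refine ⟨hc, ?_⟩
    have hfin : MeasureTheory.volume {x : ℝ | g.IsRoot x} = 0 :=
      (Polynomial.finite_setOf_isRoot hg).measure_zero _
    have hsub : Set.Ioc c₁ c₂ \ {x : ℝ | g.IsRoot x}
        ⊆ Function.support (fun x => (g.eval x) ^ 2) ∩ Set.Ioc c₁ c₂ := by
      rintro x ⟨hx1, hx2⟩
      exact ⟨pow_ne_zero 2 hx2, hx1⟩
    refine lt_of_lt_of_le ?_ (MeasureTheory.measure_mono hsub)
    rw [MeasureTheory.measure_diff_null hfin, Real.volume_Ioc]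
    exact ENNReal.ofReal_pos.mpr (by linarith)
  have hAnn : 0 ≤ A := intervalIntegral.integral_nonneg hc' fun x _ => sq_nonneg _
  -- factorization of the derivative sum
  set s : ℝ → ℝ := fun t => ∑ m ∈ Finset.Icc (k + 1) p, α m * m * t ^ (m - (k + 1)) with hs
  have hcs : Continuous s :=
    continuous_finset_sum _ fun m _ => continuous_const.mul (continuous_pow _)
  have hvfac : ∀ t : ℝ,
      (∑ m ∈ Finset.Icc (k + 1) p, α m * ((m : ℝ) * t ^ (m - 1))) = t ^ k * s t := by
    intro t
    rw [hs, Finset.mul_sum]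
    refine Finset.sum_congr rfl fun m hm => ?_
    have hmm := (Finset.mem_Icc.mp hm).1
    have h2 : t ^ (m - 1) = t ^ k * t ^ (m - (k + 1)) := by
      rw [← pow_add]; congr 1; omega
    rw [h2]; ring
  have hs0 : s 0 = α (k + 1) * (k + 1) := by
    show (∑ m ∈ Finset.Icc (k + 1) p, α m * m * (0:ℝ) ^ (m - (k + 1)))
        = α (k + 1) * (k + 1)
    rw [Finset.sum_eq_single (k + 1)]
    · simp
    · intro m hm hne
      have h1 : m - (k + 1) ≠ 0 := by
        have := (Finset.mem_Icc.mp hm); rw [Finset.mem_Icc] at hm; omega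
      simp [zero_pow h1]
    · intro h
      exact absurd (Finset.mem_Icc.mpr ⟨le_rfl, hkp⟩) h
  have hk1 : ((k : ℝ) + 1) ≠ 0 := by positivity
  have hs0ne : s 0 ≠ 0 := by
    rw [hs0]; exact mul_ne_zero hα hk1
  set L : ℝ := (s 0) ^ 2 with hLdef
  have hL : 0 < L := by positivity
  obtain ⟨ε, hε, hball⟩ :=
    Metric.continuousAt_iff.mp ((hcs.pow 2).continuousAt (x := 0)) (L / 2) (by positivity)
  have hslb : ∀ t : ℝ, |t| < ε → L / 2 ≤ (s t) ^ 2 := by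
    intro t ht
    have h := hball (x := t) (by rwa [Real.dist_eq, sub_zero])
    rw [Real.dist_eq] at h
    have h2 := abs_lt.mp h
    simp only [Pi.pow_apply] at h2
    rw [← hLdef] at h2
    linarith [h2.1]
  have hsub' : ∀ t : ℝ, |t| < ε → (s t) ^ 2 ≤ 3 * L / 2 := by
    intro t ht
    have h := hball (x := t) (by rwa [Real.dist_eq, sub_zero])
    rw [Real.dist_eq] at h
    have h2 := abs_lt.mp h
    simp only [Pi.pow_apply] at h2
    rw [← hLdef] at h2
    linarith [h2.2]
  -- factorization of f
  set r : ℝ → ℝ := fun t => ∑ m ∈ Finset.Icc (k + 1) p, α m * t ^ (m - (k + 1)) with hr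
  have hcr : Continuous r :=
    continuous_finset_sum _ fun m _ => continuous_const.mul (continuous_pow _)
  have hffac : ∀ t : ℝ,
      (∑ m ∈ Finset.Icc (k + 1) p, α m * t ^ m) = t ^ (k + 1) * r t := by
    intro t
    rw [hr, Finset.mul_sum]
    refine Finset.sum_congr rfl fun m hm => ?_
    have hmm := (Finset.mem_Icc.mp hm).1
    have h2 : t ^ m = t ^ (k + 1) * t ^ (m - (k + 1)) := by
      rw [← pow_add]; congr 1; omega
    rw [h2]; ring
  obtain ⟨M, hM⟩ :=
    (isCompact_Icc (a := (0:ℝ)) (b := 1)).exists_bound_of_continuousOn hcr.continuousOn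
  have hM0 : 0 ≤ M := le_trans (norm_nonneg _) (hM 0 ⟨le_rfl, zero_le_one⟩)
  have hrM : ∀ t : ℝ, t ∈ Set.Icc (0:ℝ) 1 → (r t) ^ 2 ≤ M ^ 2 := by
    intro t ht
    have := hM t ht
    rw [Real.norm_eq_abs] at this
    nlinarith [abs_nonneg (r t), sq_abs (r t)]
  set η : ℝ := min (ε / 2) 1 with hη
  have hηpos : 0 < η := lt_min (by linarith) zero_lt_one
  -- pointwise rewrites of u and w
  have hwt : ∀ t : ℝ, w t = t ^ (2 * k) * (s t) ^ 2 := by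
    intro t
    show (∑ m ∈ Finset.Icc (k + 1) p, α m * ((m : ℝ) * t ^ (m - 1))) ^ 2 = _
    rw [hvfac t, mul_pow, ← pow_mul]
    ring_nf
  have hut : ∀ t : ℝ, u t = t ^ (2 * k + 2) * (r t) ^ 2 := by
    intro t
    show (∑ m ∈ Finset.Icc (k + 1) p, α m * t ^ m) ^ 2 = _
    rw [hffac t, mul_pow, ← pow_mul]
    ring_nf
  -- integral of c * t^n on [0, δ]
  have hint : ∀ (c : ℝ) (n : ℕ) (δ : ℝ),
      ∫ t in (0:ℝ)..δ, c * t ^ n = c * (δ ^ (n + 1) / ((n : ℝ) + 1)) := by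
    intro c n δ
    rw [intervalIntegral.integral_const_mul, integral_pow,
      zero_pow (Nat.succ_ne_zero n), sub_zero]
  -- bounds for G
  have hGlb : ∀ δ : ℝ, 0 < δ → δ ≤ η →
      L / 2 * (δ ^ (2 * k + 1) / (2 * (k : ℝ) + 1)) ≤ G δ := by
    intro δ hδ hδη
    have hδε : ∀ t ∈ Set.Icc (0:ℝ) δ, |t| < ε := by
      intro t ht
      rw [abs_of_nonneg ht.1]
      have : δ ≤ ε / 2 := hδη.trans (min_le_left _ _)
      linarith [ht.2]
    have h := intervalIntegral.integral_mono_on hδ.le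
        ((show Continuous fun t : ℝ => L / 2 * t ^ (2 * k) from
            continuous_const.mul (continuous_pow (2 * k))).intervalIntegrable (μ := MeasureTheory.volume) 0 δ)
        (hcw.intervalIntegrable 0 δ)
        (fun t ht => by
          rw [hwt t]
          nlinarith [pow_nonneg ht.1 (2 * k), hslb t (hδε t ht)])
    rw [hint (L / 2) (2 * k) δ] at h
    refine le_trans (le_of_eq ?_) h
    push_cast
    ring
  have hGub : ∀ δ : ℝ, 0 < δ → δ ≤ η →
      G δ ≤ 3 * L / 2 * (δ ^ (2 * k + 1) / (2 * (k : ℝ) + 1)) := by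
    intro δ hδ hδη
    have hδε : ∀ t ∈ Set.Icc (0:ℝ) δ, |t| < ε := by
      intro t ht
      rw [abs_of_nonneg ht.1]
      have : δ ≤ ε / 2 := hδη.trans (min_le_left _ _)
      linarith [ht.2]
    have h := intervalIntegral.integral_mono_on hδ.le
        (hcw.intervalIntegrable 0 δ)
        ((show Continuous fun t : ℝ => 3 * L / 2 * t ^ (2 * k) from
            continuous_const.mul (continuous_pow (2 * k))).intervalIntegrable (μ := MeasureTheory.volume) 0 δ)
        (fun t ht => by
          rw [hwt t]
          nlinarith [pow_nonneg ht.1 (2 * k), hsub' t (hδε t ht)])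
    rw [hint (3 * L / 2) (2 * k) δ] at h
    refine le_trans h (le_of_eq ?_)
    push_cast
    ring
  have hFnn : ∀ δ : ℝ, 0 ≤ δ → 0 ≤ F δ :=
    fun δ hδ => intervalIntegral.integral_nonneg hδ fun t _ => sq_nonneg _
  have hGnn : ∀ δ : ℝ, 0 ≤ δ → 0 ≤ G δ :=
    fun δ hδ => intervalIntegral.integral_nonneg hδ fun t _ => sq_nonneg _
  have hFub : ∀ δ : ℝ, 0 < δ → δ ≤ η → F δ ≤ M ^ 2 * δ ^ (2 * k + 1) := by
    intro δ hδ hδη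
    have hδ1 : δ ≤ 1 := hδη.trans (min_le_right _ _)
    have h := intervalIntegral.integral_mono_on hδ.le
        (hcu.intervalIntegrable 0 δ)
        ((show Continuous fun t : ℝ => M ^ 2 * t ^ (2 * k + 2) from
            continuous_const.mul (continuous_pow (2 * k + 2))).intervalIntegrable (μ := MeasureTheory.volume) 0 δ)
        (fun t ht => by
          rw [hut t]
          have ht1 : t ∈ Set.Icc (0:ℝ) 1 := ⟨ht.1, ht.2.trans hδ1⟩
          nlinarith [pow_nonneg ht.1 (2 * k + 2), hrM t ht1])
    rw [hint (M ^ 2) (2 * k + 2) δ] at h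
    have h2 : δ ^ (2 * k + 3) ≤ δ ^ (2 * k + 1) :=
      pow_le_pow_of_le_one hδ.le hδ1 (by omega)
    have h3 : (1 : ℝ) ≤ (2 * k + 2 : ℕ) + 1 := by
      have : (0:ℝ) ≤ ((2 * k + 2 : ℕ) : ℝ) := Nat.cast_nonneg _
      linarith
    have h4 : δ ^ (2 * k + 2 + 1) / (((2 * k + 2 : ℕ) : ℝ) + 1) ≤ δ ^ (2 * k + 1) := by
      calc δ ^ (2 * k + 2 + 1) / (((2 * k + 2 : ℕ) : ℝ) + 1)
          ≤ δ ^ (2 * k + 2 + 1) / 1 :=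
            div_le_div_of_nonneg_left (pow_nonneg hδ.le _) one_pos h3
        _ = δ ^ (2 * k + 3) := by norm_num
        _ ≤ δ ^ (2 * k + 1) := h2
    calc F δ ≤ M ^ 2 * (δ ^ (2 * k + 2 + 1) / (((2 * k + 2 : ℕ) : ℝ) + 1)) := h
      _ ≤ M ^ 2 * δ ^ (2 * k + 1) := mul_le_mul_of_nonneg_left h4 (sq_nonneg M)
  -- assemble
  set c₀ : ℝ := B * (L / 2 / (2 * (k : ℝ) + 1)) with hc₀
  have h2k1 : (0:ℝ) < 2 * (k : ℝ) + 1 := by positivity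
  have hc₀pos : 0 < c₀ := by
    rw [hc₀]
    exact mul_pos hBpos (div_pos (by linarith) h2k1)
  set C₀ : ℝ := A * M ^ 2 + B * (3 * L / 2 / (2 * (k : ℝ) + 1)) with hC₀
  have hmem : Set.Ioc (0:ℝ) η ∈ 𝓝[>] (0:ℝ) := Ioc_mem_nhdsGT hηpos
  have hlower : ∀ δ : ℝ, δ ∈ Set.Ioc (0:ℝ) η → c₀ * δ ^ (2 * k + 1) ≤ A * F δ + B * G δ := by
    intro δ hδ
    have h1 := hGlb δ hδ.1 hδ.2
    have h2 : 0 ≤ A * F δ := mul_nonneg hAnn (hFnn δ hδ.1.le)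
    have h3 : B * (L / 2 * (δ ^ (2 * k + 1) / (2 * (k : ℝ) + 1))) ≤ B * G δ :=
      mul_le_mul_of_nonneg_left h1 hBpos.le
    have heq : c₀ * δ ^ (2 * k + 1)
        = B * (L / 2 * (δ ^ (2 * k + 1) / (2 * (k : ℝ) + 1))) := by
      rw [hc₀]; ring
    linarith
  have hupper : ∀ δ : ℝ, δ ∈ Set.Ioc (0:ℝ) η →
      A * F δ + B * G δ ≤ C₀ * δ ^ (2 * k + 1) := by
    intro δ hδ
    have h1 := hGub δ hδ.1 hδ.2
    have h2 := hFub δ hδ.1 hδ.2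
    have h3 : A * F δ ≤ A * (M ^ 2 * δ ^ (2 * k + 1)) := mul_le_mul_of_nonneg_left h2 hAnn
    have h4 : B * G δ ≤ B * (3 * L / 2 * (δ ^ (2 * k + 1) / (2 * (k : ℝ) + 1))) :=
      mul_le_mul_of_nonneg_left h1 hBpos.le
    have heq : C₀ * δ ^ (2 * k + 1)
        = A * (M ^ 2 * δ ^ (2 * k + 1))
          + B * (3 * L / 2 * (δ ^ (2 * k + 1) / (2 * (k : ℝ) + 1))) := by
      rw [hC₀]; ring
    exact le_trans (add_le_add h3 h4) (le_of_eq heq.symm)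
  have hnn : ∀ δ : ℝ, δ ∈ Set.Ioc (0:ℝ) η → 0 ≤ A * F δ + B * G δ := fun δ hδ =>
    add_nonneg (mul_nonneg hAnn (hFnn δ hδ.1.le)) (mul_nonneg hBpos.le (hGnn δ hδ.1.le))
  constructor
  · rw [Asymptotics.isBigO_iff]
    refine ⟨C₀, ?_⟩
    filter_upwards [hmem] with δ hδ
    rw [Real.norm_eq_abs, Real.norm_eq_abs, abs_of_nonneg (hnn δ hδ),
      abs_of_nonneg (pow_nonneg hδ.1.le _)]
    exact hupper δ hδ
  · rw [Asymptotics.isBigO_iff]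
    refine ⟨c₀⁻¹, ?_⟩
    filter_upwards [hmem] with δ hδ
    rw [Real.norm_eq_abs, Real.norm_eq_abs, abs_of_nonneg (hnn δ hδ),
      abs_of_nonneg (pow_nonneg hδ.1.le _)]
    rw [inv_mul_eq_div, le_div_iff₀ hc₀pos]
    calc δ ^ (2 * k + 1) * c₀ = c₀ * δ ^ (2 * k + 1) := mul_comm _ _
      _ ≤ A * F δ + B * G δ := hlower δ hδ
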